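/- Let $\iota$ be a finite type with $n = |\iota| \geq 2$ elements, and let $f$ be a function from subsets of $\iota$ to the nonnegative reals that is superadditive on disjoint nonempty sets: $f(X \cup Y) \geq f(X) + f(Y)$ whenever $X, Y$ are disjoint nonempty subsets of $\iota$. Then $(2^{n-1}-1)\, f(\iota) \;\geq\; \sum_{\emptyset \neq X \subsetneq \iota} f(X) \;\geq\; (2^{n-1}-1) \sum_{j \in \iota} f(\{j\})$, where the middle sum runs over all nonempty proper subsets $X$ of $\iota$. (Strong monogamy inequality.) -/

import Mathlib

section Aux

variable {ι : Type*} [Fintype ι] [DecidableEq ι]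

lemma sm_sum_singletons_le (f : Finset ι → ℝ)
    (hsuper : ∀ X Y : Finset ι, Disjoint X Y → X.Nonempty → Y.Nonempty →
      f X + f Y ≤ f (X ∪ Y)) :
    ∀ {X : Finset ι}, X.Nonempty → ∑ j ∈ X, f {j} ≤ f X := by
  intro X hX
  induction hX using Finset.Nonempty.cons_induction with
  | singleton a => simp
  | cons a s ha hs ih =>
      rw [Finset.sum_cons]
      calc f {a} + ∑ j ∈ s, f {j} ≤ f {a} + f s := by linarith
        _ ≤ f ({a} ∪ s) := hsuper _ _ (by simpa using ha) (Finset.singleton_nonempty a) hs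
        _ = f (Finset.cons a s ha) := by
            congr 1
            ext x; simp [Finset.mem_cons]

end Aux

/-- **Strong monogamy inequality.** For `f` nonnegative on subsets of a finite
type `ι` with `n = |ι| ≥ 2` elements, superadditive on disjoint nonempty sets,
`(2^(n-1) - 1) f(ι) ≥ ∑_{∅ ≠ X ⊊ ι} f(X) ≥ (2^(n-1) - 1) ∑_j f({j})`. -/
theorem strong_monogamy
    {ι : Type*} [Fintype ι] [DecidableEq ι]
    (hn : 2 ≤ Fintype.card ι)
    (f : Finset ι → ℝ) (hf0 : ∀ X, 0 ≤ f X)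
    (hsuper : ∀ X Y : Finset ι, Disjoint X Y → X.Nonempty → Y.Nonempty →
      f X + f Y ≤ f (X ∪ Y)) :
    (∑ X ∈ Finset.univ.powerset.filter
        (fun X : Finset ι => X.Nonempty ∧ X ≠ Finset.univ), f X
      ≤ ((2 : ℝ) ^ (Fintype.card ι - 1) - 1) * f Finset.univ)
    ∧ (((2 : ℝ) ^ (Fintype.card ι - 1) - 1) * ∑ j, f {j}
      ≤ ∑ X ∈ Finset.univ.powerset.filter
          (fun X : Finset ι => X.Nonempty ∧ X ≠ Finset.univ), f X) := by
  set n := Fintype.card ι with hncard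
  set S := Finset.univ.powerset.filter
      (fun X : Finset ι => X.Nonempty ∧ X ≠ Finset.univ) with hS
  have hmemS : ∀ X : Finset ι, X ∈ S ↔ X.Nonempty ∧ X ≠ Finset.univ := by
    intro X; simp [hS]
  have hcomplS : ∀ X ∈ S, Xᶜ ∈ S := by
    intro X hX
    rw [hmemS] at hX ⊢
    constructor
    · rw [Finset.nonempty_iff_ne_empty]
      simpa [Finset.compl_eq_empty_iff] using hX.2
    · intro h
      rw [Finset.compl_eq_univ_iff] at h
      exact hX.1.ne_empty h
  -- cardinality of S
  have hne : Nonempty ι := Fintype.card_pos_iff.mp (by rw [← hncard]; omega)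
  have hcardS : S.card = 2 ^ n - 2 := by
    have h1 : S = (Finset.univ.powerset.erase (∅ : Finset ι)).erase Finset.univ := by
      ext X
      simp only [hS, Finset.mem_filter, Finset.mem_erase, Finset.mem_powerset,
        Finset.nonempty_iff_ne_empty]
      tauto
    have hu : (Finset.univ : Finset ι) ∈ Finset.univ.powerset.erase (∅ : Finset ι) := by
      simp [Finset.univ_nonempty.ne_empty]
    rw [h1, Finset.card_erase_of_mem hu, Finset.card_erase_of_mem (by simp),
      Finset.card_powerset, Finset.card_univ, ← hncard]
    omega
  have h2n : 2 ≤ 2 ^ n := by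
    calc 2 ≤ n := hn
      _ ≤ 2 ^ n := Nat.lt_two_pow_self |>.le
  have hpow : (2 : ℝ) ^ n = 2 * (2 : ℝ) ^ (n - 1) := by
    obtain ⟨m, hm⟩ : ∃ m, n = m + 1 := ⟨n - 1, by omega⟩
    rw [hm, Nat.add_sub_cancel, pow_succ]; ring
  constructor
  · -- first inequality via complement pairing
    have hsumc : ∑ X ∈ S, f Xᶜ = ∑ X ∈ S, f X := by
      apply Finset.sum_nbij' (fun X => Xᶜ) (fun X => Xᶜ)
      all_goals intros; simp_all [hcomplS]
    have key : ∑ X ∈ S, (f X + f Xᶜ) ≤ ∑ _X ∈ S, f Finset.univ := by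
      apply Finset.sum_le_sum
      intro X hX
      have hX' := (hmemS X).mp hX
      have hXc' := (hmemS Xᶜ).mp (hcomplS X hX)
      have := hsuper X Xᶜ disjoint_compl_right hX'.1 hXc'.1
      simpa [Finset.union_compl] using this
    rw [Finset.sum_add_distrib, hsumc, Finset.sum_const, hcardS] at key
    have hcast : ((2 ^ n - 2 : ℕ) : ℝ) = 2 * ((2 : ℝ) ^ (n - 1) - 1) := by
      push_cast [h2n]
      rw [hpow]; ring
    rw [nsmul_eq_mul, hcast] at key
    linarith [hf0 Finset.univ]
  · -- second inequality
    have hTcard : ∀ j : ι, (S.filter (fun X => j ∈ X)).card = 2 ^ (n - 1) - 1 := by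
      intro j
      have hbij : (S.filter (fun X => j ∈ X)).card
          = (((Finset.univ.erase j).powerset.erase (Finset.univ.erase j))).card := by
        refine Finset.card_nbij' (fun X => X.erase j) (fun Y => insert j Y)
          ?_ ?_ ?li ?ri
        · intro X hX
          simp only [Finset.mem_coe, Finset.mem_filter, hmemS] at hX
          obtain ⟨⟨hXne, hXuniv⟩, hjX⟩ := hX
          simp only [Finset.mem_coe, Finset.mem_erase, Finset.mem_powerset]
          refine ⟨?_, fun x hx => Finset.mem_erase.mpr
            ⟨(Finset.mem_erase.mp hx).1, Finset.mem_univ x⟩⟩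
          intro h
          apply hXuniv
          have : X = insert j (X.erase j) := (Finset.insert_erase hjX).symm
          rw [this, h, Finset.insert_erase (Finset.mem_univ j)]
        · intro Y hY
          simp only [Finset.mem_coe, Finset.mem_erase, Finset.mem_powerset] at hY
          simp only [Finset.mem_coe, Finset.mem_filter, hmemS]
          refine ⟨⟨Finset.insert_nonempty _ _, ?_⟩, Finset.mem_insert_self _ _⟩
          intro h
          apply hY.1
          apply Finset.Subset.antisymm hY.2
          intro x hx
          rcases eq_or_ne x j with rfl | hxj
          · exact absurd rfl (Finset.mem_erase.mp hx).1
          · have : x ∈ insert j Y := h ▸ Finset.mem_univ x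
            exact (Finset.mem_insert.mp this).resolve_left hxj
        case li =>
          intro X hX
          simp only [Finset.mem_coe, Finset.mem_filter] at hX
          exact Finset.insert_erase hX.2
        case ri =>
          intro Y hY
          simp only [Finset.mem_coe, Finset.mem_erase, Finset.mem_powerset] at hY
          apply Finset.erase_insert
          intro hjY
          exact absurd ((hY.2) hjY) (by simp)
      rw [hbij, Finset.card_erase_of_mem (by simp), Finset.card_powerset,
        Finset.card_erase_of_mem (Finset.mem_univ j), Finset.card_univ, ← hncard]
    have hswap : ∑ X ∈ S, ∑ j ∈ X, f {j}
        = ∑ j, ((S.filter (fun X => j ∈ X)).card : ℝ) * f {j} := by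
      have : ∀ X ∈ S, ∑ j ∈ X, f {j}
          = ∑ j : ι, if j ∈ X then f {j} else 0 := by
        intro X _
        rw [Finset.sum_ite_mem, Finset.univ_inter]
      rw [Finset.sum_congr rfl this, Finset.sum_comm]
      refine Finset.sum_congr rfl fun j _ => ?_
      rw [← Finset.sum_filter, Finset.sum_const, nsmul_eq_mul]
    have hle : ∑ X ∈ S, ∑ j ∈ X, f {j} ≤ ∑ X ∈ S, f X :=
      Finset.sum_le_sum fun X hX => sm_sum_singletons_le f hsuper ((hmemS X).mp hX).1
    have hone : 1 ≤ 2 ^ (n - 1) := Nat.one_le_two_pow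
    have hcast2 : ∀ j : ι, ((S.filter (fun X => j ∈ X)).card : ℝ)
        = (2 : ℝ) ^ (n - 1) - 1 := by
      intro j
      rw [hTcard j]
      push_cast [hone]
      ring
    calc ((2 : ℝ) ^ (n - 1) - 1) * ∑ j, f {j}
        = ∑ j, ((S.filter (fun X => j ∈ X)).card : ℝ) * f {j} := by
          rw [Finset.mul_sum]
          exact Finset.sum_congr rfl fun j _ => by rw [hcast2 j]
      _ = ∑ X ∈ S, ∑ j ∈ X, f {j} := hswap.symm
      _ ≤ ∑ X ∈ S, f X := hle
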